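/- Let R = ℂ[t, t⁻¹] be the ring of Laurent polynomials over ℂ, and let W = Der_ℂ(R) be the Lie algebra of ℂ-linear derivations of R with the commutator bracket (the Witt algebra). Let D ∈ W and assume that ad D acts locally finitely on W, i.e. for every E ∈ W the ℂ-linear span of {(ad D)^k (E) : k ∈ ℕ} is finite-dimensional. Then D = c • ∂₀ for some c ∈ ℂ, where ∂₀ is the Euler derivation t·d/dt, i.e. the unique ℂ-linear derivation of R with ∂₀(t) = t. -/

import Mathlib

open LaurentPolynomial

noncomputable section WittAux
abbrev LP := LaurentPolynomial ℂ

noncomputable def euD : LP →ₗ[ℂ] LP :=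
  (AddMonoidAlgebra.coeffLinearEquiv ℂ).symm.toLinearMap ∘ₗ
    (Finsupp.lsum ℂ fun n : ℤ => (n : ℂ) • Finsupp.lsingle n) ∘ₗ
    (AddMonoidAlgebra.coeffLinearEquiv ℂ).toLinearMap

lemma euD_single (n : ℤ) (a : ℂ) :
    euD (AddMonoidAlgebra.single n a) = (n : ℂ) • AddMonoidAlgebra.single n a := by
  show AddMonoidAlgebra.ofCoeff (Finsupp.lsum ℂ (fun n : ℤ => (n : ℂ) • Finsupp.lsingle n)
    (Finsupp.single n a)) = _
  rw [Finsupp.lsum_single]; rfl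

lemma euD_CT (a : ℂ) (n : ℤ) : euD (C a * T n) = (n : ℂ) • (C a * T n) := by
  rw [← single_eq_C_mul_T]; exact euD_single n a

lemma euD_T (n : ℤ) : euD (T n) = (n : ℂ) • T n := euD_single n 1

lemma euD_apply (f : LP) (m : ℤ) : (euD f).coeff m = (m : ℂ) * f.coeff m := by
  induction f using AddMonoidAlgebra.induction_linear with
  | zero => simp
  | add a b ha hb =>
      rw [map_add, AddMonoidAlgebra.coeff_add, Finsupp.add_apply, ha, hb,
        AddMonoidAlgebra.coeff_add, Finsupp.add_apply, mul_add]
  | single n a =>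
      rw [euD_single]
      show ((n:ℂ) • (Finsupp.single n a : ℤ →₀ ℂ)) m
        = (m:ℂ) * (Finsupp.single n a : ℤ →₀ ℂ) m
      rw [Finsupp.smul_apply, Finsupp.single_apply]
      split <;> simp_all [smul_eq_mul]

lemma CT_mul (a b : ℂ) (n m : ℤ) :
    (C a * T n : LP) * (C b * T m) = C (a*b) * T (n+m) := by
  rw [T_add, map_mul]; ring

lemma euD_mul (x y : LP) : euD (x * y) = x * euD y + y * euD x := by
  induction x using AddMonoidAlgebra.induction_linear with
  | zero => simp
  | add a b ha hb => rw [add_mul, map_add, ha, hb, map_add]; ring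
  | single n a =>
      induction y using AddMonoidAlgebra.induction_linear with
      | zero => simp
      | add c d hc hd => rw [mul_add, map_add, hc, hd, map_add]; ring
      | single m b =>
          rw [single_eq_C_mul_T, single_eq_C_mul_T, CT_mul, euD_CT, euD_CT, euD_CT,
            mul_smul_comm, mul_smul_comm, CT_mul, CT_mul, mul_comm b a, add_comm m n,
            ← add_smul]
          push_cast
          rw [add_comm (m:ℂ) (n:ℂ)]

noncomputable def Phi (g : LP) : Derivation ℂ LP LP where
  toLinearMap := (LinearMap.mulLeft ℂ g) ∘ₗ euD
  map_one_eq_zero' := by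
    have h : euD 1 = 0 := by simpa using euD_single 0 1
    simp [h]
  leibniz' a b := by
    simp only [LinearMap.coe_comp, Function.comp_apply, LinearMap.mulLeft_apply, euD_mul,
      smul_eq_mul]
    ring

lemma Phi_apply (g h : LP) : Phi g h = g * euD h := rfl

lemma derivation_T (D : Derivation ℂ LP LP) (n : ℤ) :
    D (T n) = C (n : ℂ) * (T (n-1) * D (T 1)) := by
  induction n using Int.induction_on with
  | zero => simp
  | succ k ih =>
      have hTs : (T ((k:ℤ)+1) : LP) = T k * T 1 := T_add k 1
      have h1 : (T 1 : LP) * T ((k:ℤ)-1) = T (k:ℤ) := by rw [← T_add]; ring_nf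
      have hC : (C (((k:ℤ)+1 : ℤ) : ℂ) : LP) = C ((k:ℤ):ℂ) + 1 := by
        push_cast; rw [map_add, map_one]
      rw [hTs, Derivation.leibniz, smul_eq_mul, smul_eq_mul, ih, hC,
        show ((k:ℤ)+1-1 : ℤ) = (k:ℤ) by ring]
      calc T (k:ℤ) * D (T 1) + T 1 * (C ((k:ℤ):ℂ) * (T ((k:ℤ)-1) * D (T 1)))
          = T (k:ℤ) * D (T 1) + C ((k:ℤ):ℂ) * ((T 1 * T ((k:ℤ)-1)) * D (T 1)) := by ring
        _ = (C ((k:ℤ):ℂ) + 1) * (T (k:ℤ) * D (T 1)) := by rw [h1]; ring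
  | pred k ih =>
      have key : (T (-1) : LP) * T 1 = 1 := by rw [← T_add]; norm_num
      have h3 : (T (-1) : LP) * T (-(k:ℤ)-1) = T (-(k:ℤ)-1-1) := by rw [← T_add]; ring_nf
      have hC : (C ((-(k:ℤ)-1 : ℤ) : ℂ) : LP) = C ((-(k:ℤ) : ℤ):ℂ) - 1 := by
        push_cast; rw [map_sub, map_one]
      have hsplit : (T (-(k:ℤ)) : LP) = T (-(k:ℤ)-1) * T 1 := by rw [← T_add]; ring_nf
      have h2 := Derivation.leibniz D (T (-(k:ℤ)-1)) (T 1)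
      rw [← hsplit, ih, smul_eq_mul, smul_eq_mul] at h2
      have h4 : (T 1 : LP) * D (T (-(k:ℤ)-1))
          = C ((-(k:ℤ) : ℤ):ℂ) * (T (-(k:ℤ)-1) * D (T 1)) - T (-(k:ℤ)-1) * D (T 1) := by
        linear_combination -h2
      calc D (T (-(k:ℤ)-1)) = ((T (-1) * T 1 : LP)) * D (T (-(k:ℤ)-1)) := by
            rw [key, one_mul]
        _ = T (-1) * (C ((-(k:ℤ) : ℤ):ℂ) * (T (-(k:ℤ)-1) * D (T 1))
              - T (-(k:ℤ)-1) * D (T 1)) := by rw [mul_assoc, h4]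
        _ = (C ((-(k:ℤ) : ℤ):ℂ) - 1) * ((T (-1) * T (-(k:ℤ)-1)) * D (T 1)) := by ring
        _ = C ((-(k:ℤ)-1 : ℤ) : ℂ) * (T (-(k:ℤ)-1-1) * D (T 1)) := by rw [h3, hC]

lemma ext_T1 {D1 D2 : Derivation ℂ LP LP} (h : D1 (T 1) = D2 (T 1)) : D1 = D2 := by
  apply Derivation.ext
  intro f
  induction f using AddMonoidAlgebra.induction_linear with
  | zero => simp
  | add a b ha hb => rw [map_add, map_add, ha, hb]
  | single n a =>
      have hs : (AddMonoidAlgebra.single n a : LP) = a • T n := by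
        rw [show (T n : LP) = AddMonoidAlgebra.single n 1 from rfl, AddMonoidAlgebra.smul_single, smul_eq_mul,
          mul_one]
      rw [hs, Derivation.map_smul, Derivation.map_smul, derivation_T D1, derivation_T D2, h]
lemma euD_T1 : euD (T 1) = T 1 := by simpa using euD_T 1

lemma bracket_Phi (g h : LP) : ⁅Phi g, Phi h⁆ = Phi (g * euD h - h * euD g) := by
  apply ext_T1
  rw [Derivation.commutator_apply, Phi_apply, Phi_apply, Phi_apply, Phi_apply, Phi_apply,
    euD_T1, euD_mul, euD_mul, euD_T1]
  ring

lemma D_eq_Phi (D : Derivation ℂ LP LP) : D = Phi (D (T 1) * T (-1)) := by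
  apply ext_T1
  rw [Phi_apply, euD_T1, mul_assoc, ← T_add]
  norm_num

lemma iterate_Phi (g h : LP) (k : ℕ) :
    (fun F => ⁅Phi g, F⁆)^[k] (Phi h) = Phi ((fun x => g * euD x - x * euD g)^[k] h) := by
  induction k with
  | zero => simp
  | succ k ih =>
      rw [Function.iterate_succ_apply', Function.iterate_succ_apply', ih, bracket_Phi]

noncomputable def ev : Derivation ℂ LP LP →ₗ[ℂ] LP where
  toFun E := E (T 1)
  map_add' E F := rfl
  map_smul' c E := rfl

noncomputable def coeffL (m : ℤ) : LP →ₗ[ℂ] ℂ where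
  toFun f := f.coeff m
  map_add' _ _ := rfl
  map_smul' _ _ := rfl

lemma indep {v : ℕ → LP} {d : ℕ → ℤ} (h1 : ∀ k, (v k).coeff (d k) ≠ 0)
    (h0 : ∀ j k, j < k → (v j).coeff (d k) = 0) : LinearIndependent ℂ v := by
  rw [linearIndependent_iff']
  intro s c
  induction s using Finset.induction_on_max with
  | empty => intro _ i hi; exact absurd hi (Finset.notMem_empty i)
  | insert a s ha ih =>
      intro hsum
      have hns : a ∉ s := fun hin => lt_irrefl a (ha a hin)
      rw [Finset.sum_insert hns] at hsum
      have hap := congrArg (coeffL (d a)) hsum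
      rw [map_add, map_sum, map_zero, map_smul] at hap
      have hz : ∀ i ∈ s, coeffL (d a) (c i • v i) = 0 := by
        intro i hi
        rw [map_smul, show coeffL (d a) (v i) = (v i).coeff (d a) from rfl, h0 i a (ha i hi), smul_zero]
      rw [Finset.sum_eq_zero hz, add_zero, show coeffL (d a) (v a) = (v a).coeff (d a) from rfl,
        smul_eq_mul] at hap
      have hca : c a = 0 := by
        rcases mul_eq_zero.mp hap with h | h
        · exact h
        · exact absurd h (h1 a)
      have hrest : ∀ i ∈ s, c i = 0 := by
        apply ih
        rw [hca, zero_smul, zero_add] at hsum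
        exact hsum
      intro i hi
      rcases Finset.mem_insert.mp hi with rfl | hi'
      · exact hca
      · exact hrest i hi'

lemma mem_le {x : LP} {a : ℤ} (hx : ∀ m, a < m → x.coeff m = 0) {i : ℤ}
    (hi : i ∈ x.coeff.support) : i ≤ a := by
  by_contra h
  exact (Finsupp.mem_support_iff.mp hi) (hx i (by omega))

lemma mem_ge {x : LP} {a : ℤ} (hx : ∀ m, m < a → x.coeff m = 0) {i : ℤ}
    (hi : i ∈ x.coeff.support) : a ≤ i := by
  by_contra h
  exact (Finsupp.mem_support_iff.mp hi) (hx i (by omega))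

lemma mul_coeff_top {x y : LP} {a b : ℤ} (hx : ∀ m, a < m → x.coeff m = 0)
    (hy : ∀ m, b < m → y.coeff m = 0) : (x * y).coeff (a + b) = x.coeff a * y.coeff b := by
  classical
  rw [AddMonoidAlgebra.coeff_mul]
  simp only [Finsupp.sum]
  rw [Finset.sum_eq_single a]
  · rw [Finset.sum_eq_single b]
    · simp
    · intro j hj hne
      exact if_neg (fun he => hne (by omega))
    · intro hb
      rw [if_pos rfl, Finsupp.notMem_support_iff.mp hb, mul_zero]
  · intro i hi hne
    apply Finset.sum_eq_zero
    intro j hj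
    have h1 : i ≤ a := mem_le hx hi
    have h2 : j ≤ b := mem_le hy hj
    exact if_neg (fun he => hne (by omega))
  · intro ha
    apply Finset.sum_eq_zero
    intro j hj
    rw [Finsupp.notMem_support_iff.mp ha, zero_mul, ite_self]

lemma mul_coeff_top_zero {x y : LP} {a b : ℤ} (hx : ∀ m, a < m → x.coeff m = 0)
    (hy : ∀ m, b < m → y.coeff m = 0) {p : ℤ} (hp : a + b < p) : (x * y).coeff p = 0 := by
  classical
  rw [AddMonoidAlgebra.coeff_mul]
  simp only [Finsupp.sum]
  apply Finset.sum_eq_zero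
  intro i hi
  apply Finset.sum_eq_zero
  intro j hj
  have h1 : i ≤ a := mem_le hx hi
  have h2 : j ≤ b := mem_le hy hj
  exact if_neg (fun he => by omega)

lemma mul_coeff_bot {x y : LP} {a b : ℤ} (hx : ∀ m, m < a → x.coeff m = 0)
    (hy : ∀ m, m < b → y.coeff m = 0) : (x * y).coeff (a + b) = x.coeff a * y.coeff b := by
  classical
  rw [AddMonoidAlgebra.coeff_mul]
  simp only [Finsupp.sum]
  rw [Finset.sum_eq_single a]
  · rw [Finset.sum_eq_single b]
    · simp
    · intro j hj hne
      exact if_neg (fun he => hne (by omega))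
    · intro hb
      rw [if_pos rfl, Finsupp.notMem_support_iff.mp hb, mul_zero]
  · intro i hi hne
    apply Finset.sum_eq_zero
    intro j hj
    have h1 : a ≤ i := mem_ge hx hi
    have h2 : b ≤ j := mem_ge hy hj
    exact if_neg (fun he => hne (by omega))
  · intro ha
    apply Finset.sum_eq_zero
    intro j hj
    rw [Finsupp.notMem_support_iff.mp ha, zero_mul, ite_self]

lemma mul_coeff_bot_zero {x y : LP} {a b : ℤ} (hx : ∀ m, m < a → x.coeff m = 0)
    (hy : ∀ m, m < b → y.coeff m = 0) {p : ℤ} (hp : p < a + b) : (x * y).coeff p = 0 := by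
  classical
  rw [AddMonoidAlgebra.coeff_mul]
  simp only [Finsupp.sum]
  apply Finset.sum_eq_zero
  intro i hi
  apply Finset.sum_eq_zero
  intro j hj
  have h1 : a ≤ i := mem_ge hx hi
  have h2 : b ≤ j := mem_ge hy hj
  exact if_neg (fun he => by omega)

lemma sub_coeff (x y : LP) (p : ℤ) : (x - y).coeff p = x.coeff p - y.coeff p :=
  map_sub (coeffL p) x y

lemma A_top {g x : LP} {M a : ℤ} (hg : ∀ p, M < p → g.coeff p = 0) (hx : ∀ p, a < p → x.coeff p = 0) :
    ((g * euD x - x * euD g).coeff (M + a) = g.coeff M * x.coeff a * ((a : ℂ) - (M : ℂ))) ∧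
      ∀ p, M + a < p → (g * euD x - x * euD g).coeff p = 0 := by
  have hgd : ∀ p, M < p → (euD g).coeff p = 0 := fun p hp => by rw [euD_apply, hg p hp, mul_zero]
  have hxd : ∀ p, a < p → (euD x).coeff p = 0 := fun p hp => by rw [euD_apply, hx p hp, mul_zero]
  constructor
  · have e1 : (g * euD x).coeff (M + a) = g.coeff M * ((a:ℂ) * x.coeff a) := by
      rw [mul_coeff_top hg hxd, euD_apply]
    have e2 : (x * euD g).coeff (M + a) = x.coeff a * ((M:ℂ) * g.coeff M) := by
      rw [show M + a = a + M by ring, mul_coeff_top hx hgd, euD_apply]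
    rw [sub_coeff, e1, e2]; ring
  · intro p hp
    rw [sub_coeff, mul_coeff_top_zero hg hxd hp,
      mul_coeff_top_zero hx hgd (by omega : a + M < p), sub_zero]

lemma A_bot {g x : LP} {L a : ℤ} (hg : ∀ p, p < L → g.coeff p = 0) (hx : ∀ p, p < a → x.coeff p = 0) :
    ((g * euD x - x * euD g).coeff (L + a) = g.coeff L * x.coeff a * ((a : ℂ) - (L : ℂ))) ∧
      ∀ p, p < L + a → (g * euD x - x * euD g).coeff p = 0 := by
  have hgd : ∀ p, p < L → (euD g).coeff p = 0 := fun p hp => by rw [euD_apply, hg p hp, mul_zero]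
  have hxd : ∀ p, p < a → (euD x).coeff p = 0 := fun p hp => by rw [euD_apply, hx p hp, mul_zero]
  constructor
  · have e1 : (g * euD x).coeff (L + a) = g.coeff L * ((a:ℂ) * x.coeff a) := by
      rw [mul_coeff_bot hg hxd, euD_apply]
    have e2 : (x * euD g).coeff (L + a) = x.coeff a * ((L:ℂ) * g.coeff L) := by
      rw [show L + a = a + L by ring, mul_coeff_bot hx hgd, euD_apply]
    rw [sub_coeff, e1, e2]; ring
  · intro p hp
    rw [sub_coeff, mul_coeff_bot_zero hg hxd hp,
      mul_coeff_bot_zero hx hgd (by omega : p < a + L), sub_zero]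

lemma shift_coeff (x : LP) (p : ℤ) : (x * T 1 : LP).coeff p = x.coeff (p - 1) := by
  rw [show (T 1 : LP) = AddMonoidAlgebra.single 1 1 from rfl]
  erw [AddMonoidAlgebra.coeff_mul_single_apply, mul_one, sub_eq_add_neg]

lemma not_finitedim (g h0 : LP) (e : ℕ → ℤ)
    (h1 : ∀ k, ((fun x => g * euD x - x * euD g)^[k] h0).coeff (e k) ≠ 0)
    (h2 : ∀ j k, j < k → ((fun x => g * euD x - x * euD g)^[j] h0).coeff (e k) = 0) :
    ¬ FiniteDimensional ℂ (Submodule.span ℂ (Set.range fun k : ℕ =>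
        (fun F => ⁅Phi g, F⁆)^[k] (Phi h0))) := by
  intro hFD
  have hem : ∀ x : LP, ev (Phi x) = x * T 1 := fun x => by
    show Phi x (T 1) = x * T 1
    rw [Phi_apply, euD_T1]
  have hli0 : LinearIndependent ℂ
      (fun k : ℕ => (((fun x => g * euD x - x * euD g)^[k] h0) * T 1 : LP)) := by
    apply indep (d := fun k => e k + 1)
    · intro k
      rw [shift_coeff, add_sub_cancel_right]
      exact h1 k
    · intro j k hjk
      rw [shift_coeff, add_sub_cancel_right]
      exact h2 j k hjk
  have hfun : (⇑ev ∘ fun k : ℕ => (fun F => ⁅Phi g, F⁆)^[k] (Phi h0))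
      = fun k : ℕ => (((fun x => g * euD x - x * euD g)^[k] h0) * T 1 : LP) :=
    funext fun k => by rw [Function.comp_apply, iterate_Phi, hem]
  have hFD2 : FiniteDimensional ℂ (Submodule.span ℂ
      (Set.range (⇑ev ∘ fun k : ℕ => (fun F => ⁅Phi g, F⁆)^[k] (Phi h0)))) := by
    have hmap : Submodule.span ℂ
        (Set.range (⇑ev ∘ fun k : ℕ => (fun F => ⁅Phi g, F⁆)^[k] (Phi h0)))
        = Submodule.map ev (Submodule.span ℂ
            (Set.range fun k : ℕ => (fun F => ⁅Phi g, F⁆)^[k] (Phi h0))) := by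
      rw [Submodule.map_span, Set.range_comp]
    rw [hmap]
    haveI := hFD
    exact Module.Finite.map _ ev
  rw [hfun] at hFD2
  haveI : Module.Finite ℂ ↥(Submodule.span ℂ (Set.range
      (fun k : ℕ => (((fun x => g * euD x - x * euD g)^[k] h0) * T 1 : LP)))) := hFD2
  have h3 : Finite ℕ := (linearIndependent_span hli0).finite
  haveI := h3
  exact not_finite ℕ

lemma top_case (g : LP) (M : ℤ) (hM : 0 < M) (hgM : g.coeff M ≠ 0) (hbd : ∀ p, M < p → g.coeff p = 0) :
    ¬ FiniteDimensional ℂ (Submodule.span ℂ (Set.range fun k : ℕ =>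
        (fun F => ⁅Phi g, F⁆)^[k] (Phi (T (M+1))))) := by
  have claim : ∀ k : ℕ, (((fun x => g * euD x - x * euD g)^[k] (T (M+1))).coeff ((M+1) + k * M) ≠ 0)
      ∧ ∀ p, (M+1) + k * M < p → ((fun x => g * euD x - x * euD g)^[k] (T (M+1))).coeff p = 0 := by
    intro k
    induction k with
    | zero =>
        constructor
        · simp [T_apply]
        · intro p hp
          rw [Function.iterate_zero_apply, T_apply, if_neg (by omega)]
    | succ k ih =>
        have hstep : (fun x => g * euD x - x * euD g)^[k+1] (T (M+1))
            = g * euD ((fun x => g * euD x - x * euD g)^[k] (T (M+1)))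
              - ((fun x => g * euD x - x * euD g)^[k] (T (M+1))) * euD g :=
          Function.iterate_succ_apply' _ k _
        have hA := A_top (a := (M+1) + k * M) hbd ih.2
        have hidx : (M+1) + (k+1 : ℕ) * M = M + ((M+1) + k * M) := by push_cast; ring
        constructor
        · rw [hstep, hidx, hA.1]
          apply mul_ne_zero (mul_ne_zero hgM ih.1)
          rw [sub_ne_zero]
          rw [show ((((M+1) + k * M : ℤ) : ℂ)) = (((M+1) + k * M : ℤ) : ℂ) from rfl]
          intro hcast
          have : ((M+1) + k * M : ℤ) = M := by exact_mod_cast hcast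
          have hk : (0:ℤ) ≤ k * M := mul_nonneg (by positivity) (by omega)
          omega
        · intro p hp
          rw [hstep]
          exact hA.2 p (by omega)
  apply not_finitedim g (T (M+1)) (fun k => (M+1) + k * M)
  · exact fun k => (claim k).1
  · intro j k hjk
    apply (claim j).2
    have : (j:ℤ) * M < (k:ℤ) * M := by
      apply mul_lt_mul_of_pos_right _ hM
      exact_mod_cast hjk
    omega

lemma bot_case (g : LP) (L : ℤ) (hL : L < 0) (hgL : g.coeff L ≠ 0) (hbd : ∀ p, p < L → g.coeff p = 0) :
    ¬ FiniteDimensional ℂ (Submodule.span ℂ (Set.range fun k : ℕ =>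
        (fun F => ⁅Phi g, F⁆)^[k] (Phi (T (L-1))))) := by
  have claim : ∀ k : ℕ, (((fun x => g * euD x - x * euD g)^[k] (T (L-1))).coeff ((L-1) + k * L) ≠ 0)
      ∧ ∀ p, p < (L-1) + k * L → ((fun x => g * euD x - x * euD g)^[k] (T (L-1))).coeff p = 0 := by
    intro k
    induction k with
    | zero =>
        constructor
        · simp [T_apply]
        · intro p hp
          rw [Function.iterate_zero_apply, T_apply, if_neg (by omega)]
    | succ k ih =>
        have hstep : (fun x => g * euD x - x * euD g)^[k+1] (T (L-1))
            = g * euD ((fun x => g * euD x - x * euD g)^[k] (T (L-1)))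
              - ((fun x => g * euD x - x * euD g)^[k] (T (L-1))) * euD g :=
          Function.iterate_succ_apply' _ k _
        have hA := A_bot (a := (L-1) + k * L) hbd ih.2
        have hidx : (L-1) + (k+1 : ℕ) * L = L + ((L-1) + k * L) := by push_cast; ring
        constructor
        · rw [hstep, hidx, hA.1]
          apply mul_ne_zero (mul_ne_zero hgL ih.1)
          rw [sub_ne_zero]
          intro hcast
          have : ((L-1) + k * L : ℤ) = L := by exact_mod_cast hcast
          have hk : (k:ℤ) * L ≤ 0 := mul_nonpos_of_nonneg_of_nonpos (by positivity) (by omega)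
          omega
        · intro p hp
          rw [hstep]
          exact hA.2 p (by omega)
  apply not_finitedim g (T (L-1)) (fun k => (L-1) + k * L)
  · exact fun k => (claim k).1
  · intro j k hjk
    apply (claim j).2
    have : (k:ℤ) * L < (j:ℤ) * L := by
      apply mul_lt_mul_of_neg_right _ hL
      exact_mod_cast hjk
    omega

lemma smul_T (c : ℂ) (n : ℤ) : c • (T n : LP) = C c * T n := by
  rw [← single_eq_C_mul_T, show (T n : LP) = AddMonoidAlgebra.single n 1 from rfl, AddMonoidAlgebra.smul_single,
    smul_eq_mul, mul_one]

end WittAux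

theorem witt_locally_finite_is_euler
    (D : Derivation ℂ (LaurentPolynomial ℂ) (LaurentPolynomial ℂ))
    (hD : ∀ E : Derivation ℂ (LaurentPolynomial ℂ) (LaurentPolynomial ℂ),
      FiniteDimensional ℂ
        (Submodule.span ℂ (Set.range fun k : ℕ => (fun F => ⁅D, F⁆)^[k] E))) :
    ∀ euler : Derivation ℂ (LaurentPolynomial ℂ) (LaurentPolynomial ℂ),
      euler (T 1) = T 1 → ∃ c : ℂ, D = c • euler := by
  intro euler heuler
  have hDg : D = Phi (D (T 1) * T (-1)) := D_eq_Phi D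
  set g : LP := D (T 1) * T (-1) with hgdef
  rw [hDg] at hD
  have hconst : ∀ m : ℤ, m ≠ 0 → g.coeff m = 0 := by
    by_contra hcon
    push_neg at hcon
    obtain ⟨m, hm0, hgm⟩ := hcon
    have hmem : m ∈ g.coeff.support := Finsupp.mem_support_iff.mpr hgm
    have hne : g.coeff.support.Nonempty := ⟨m, hmem⟩
    by_cases hM : 0 < g.coeff.support.max' hne
    · exact absurd (hD (Phi (T (g.coeff.support.max' hne + 1))))
        (top_case g _ hM (Finsupp.mem_support_iff.mp (g.coeff.support.max'_mem hne))
          (fun p hp => Finsupp.notMem_support_iff.mp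
            (fun hin => absurd (Finset.le_max' _ p hin) (by omega))))
    · have hL : g.coeff.support.min' hne < 0 := by
        have h1 : m ≤ g.coeff.support.max' hne := Finset.le_max' _ m hmem
        have h2 : g.coeff.support.min' hne ≤ m := Finset.min'_le _ m hmem
        omega
      exact absurd (hD (Phi (T (g.coeff.support.min' hne - 1))))
        (bot_case g _ hL (Finsupp.mem_support_iff.mp (g.coeff.support.min'_mem hne))
          (fun p hp => Finsupp.notMem_support_iff.mp
            (fun hin => absurd (Finset.min'_le _ p hin) (by omega))))
  refine ⟨g.coeff 0, ?_⟩
  have hgC : g = C (g.coeff 0) := by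
    apply LaurentPolynomial.ext
    intro p
    rw [C_apply]
    by_cases hp : p = 0
    · subst hp; simp
    · rw [if_neg hp, hconst p hp]
  apply ext_T1
  rw [hDg, Phi_apply, euD_T1]
  conv_lhs => rw [hgC]
  rw [Derivation.smul_apply, heuler, smul_T]
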